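/- Let F be a hard 3-satisfiable weighted CNF formula, i.e., every clause is either a positive unit clause {x_i} or of the form {not x_i, y_j} or {not x_i, not y_j} where x_i is a unit variable and y_j is not. Let n2 be the number of variables y_j that occur in two-literal clauses but not in unit clauses. Then there exists an assignment tau with sat_tau(F) >= (2/3) w(F) + (2/9) n2. -/

import Mathlib

open Classical

/-- A clause: a finite set of literals, each a (variable, polarity) pair. -/
abbrev Clause := Finset (ℕ × Bool)

/-- A truth assignment satisfies a clause if some literal evaluates to true. -/
def SatC (τ : ℕ → Bool) (C : Clause) : Prop := ∃ l ∈ C, τ l.1 = l.2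

/-- A CNF formula: clauses are nonempty and contain no variable together with its negation. -/
def IsCNF (F : Finset Clause) : Prop :=
  ∀ C ∈ F, C.Nonempty ∧ ∀ v : ℕ, ¬((v, true) ∈ C ∧ (v, false) ∈ C)

/-- Total weight of a set of clauses. -/
def wt (w : Clause → ℕ) (G : Finset Clause) : ℕ := ∑ C ∈ G, w C

/-- Total weight of the clauses of `G` satisfied by `τ`. -/
noncomputable def satWt (w : Clause → ℕ) (τ : ℕ → Bool) (G : Finset Clause) : ℕ :=
  ∑ C ∈ G.filter (fun C => SatC τ C), w C

/-- `F` is 2-satisfiable. -/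
def Sat2 (F : Finset Clause) : Prop :=
  ∀ C1 ∈ F, ∀ C2 ∈ F, ∃ τ, SatC τ C1 ∧ SatC τ C2

/-- `F` is 3-satisfiable. -/
def Sat3 (F : Finset Clause) : Prop :=
  ∀ C1 ∈ F, ∀ C2 ∈ F, ∀ C3 ∈ F, ∃ τ, SatC τ C1 ∧ SatC τ C2 ∧ SatC τ C3

/-- The set of variables of a formula. -/
def vars (F : Finset Clause) : Finset ℕ := F.sup (fun C => C.image Prod.fst)

/-- The set of clauses of `F` containing a variable of `U`. -/
noncomputable def FU (F : Finset Clause) (U : Finset ℕ) : Finset Clause :=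
  F.filter (fun C => ∃ l ∈ C, l.1 ∈ U)

/-- Unit variables: variables occurring in unit clauses. -/
def unitVars (F : Finset Clause) : Finset ℕ :=
  (F.filter (fun C => C.card = 1)).sup (fun C => C.image Prod.fst)

/-- All unit clauses of `F` are positive. -/
def UnitPos (F : Finset Clause) : Prop :=
  ∀ C ∈ F, C.card = 1 → ∃ x, C = {(x, true)}

/-- A hard clause: a positive unit clause, or a two-literal clause `{¬x, y}` / `{¬x, ¬y}`
with `x` a unit variable and `y` not a unit variable. -/
def IsHard (F : Finset Clause) (C : Clause) : Prop :=
  (∃ x, C = {(x, true)}) ∨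
  (∃ x ∈ unitVars F, ∃ y ∉ unitVars F, ∃ b : Bool, C = {(x, false), (y, b)})

/-- The soft (non-hard) clauses of `F`. -/
noncomputable def softF (F : Finset Clause) : Finset Clause :=
  F.filter (fun C => ¬ IsHard F C)

/-- Two-literal hard clauses. -/
noncomputable def F2set (F : Finset Clause) : Finset Clause :=
  F.filter (fun C => ∃ x ∈ unitVars F, ∃ y ∉ unitVars F, ∃ b : Bool, C = {(x, false), (y, b)})

/-- Non-unit variables occurring in two-literal hard clauses. -/
noncomputable def V2set (F : Finset Clause) : Finset ℕ :=
  ((F2set F).sup (fun C => C.image Prod.fst)) \ unitVars F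

/-- `F` is a hard formula: every clause is hard. -/
def HardFormula (F : Finset Clause) : Prop := ∀ C ∈ F, IsHard F C

/-- `F` is expanding: every set `X` of variables is covered by clauses of total weight at least `|X|`. -/
def Expanding (F : Finset Clause) (w : Clause → ℕ) : Prop :=
  ∀ X ⊆ vars F, X.card ≤ wt w (FU F X)

/-- Extend an assignment on the variables of `F` to all of `ℕ`. -/
noncomputable def extAssign (F : Finset Clause) (α : {v // v ∈ vars F} → Bool) : ℕ → Bool :=
  fun n => if h : n ∈ vars F then α ⟨n, h⟩ else false

/-- The probability that the random assignment (unit variables true with probability 2/3,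
other variables true with probability 1/2, independently) satisfies the clause `C`. -/
noncomputable def probSat (F : Finset Clause) (C : Clause) : ℝ :=
  ∑ α : {v // v ∈ vars F} → Bool,
    (∏ v : {v // v ∈ vars F},
      (if (v : ℕ) ∈ unitVars F then (if α v then (2:ℝ)/3 else 1/3) else 1/2)) *
    (if SatC (extAssign F α) C then 1 else 0)


section Counting
variable {ι : Type} [Fintype ι] [DecidableEq ι]

lemma split1_card (i0 : ι) :
    Fintype.card (ι → Fin 3) = 3 * Fintype.card ({j // j ≠ i0} → Fin 3) := by
  rw [Fintype.card_congr (Equiv.funSplitAt i0 (Fin 3)), Fintype.card_prod, Fintype.card_fin]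

lemma split1_sum {M : Type} [AddCommMonoid M] (i0 : ι) (f : Fin 3 → M) :
    ∑ σ : ι → Fin 3, f (σ i0)
      = Fintype.card ({j // j ≠ i0} → Fin 3) • ∑ v : Fin 3, f v := by
  rw [← Equiv.sum_comp (Equiv.funSplitAt i0 (Fin 3)).symm (fun σ => f (σ i0))]
  have h : ∀ p : Fin 3 × ({j // j ≠ i0} → Fin 3),
      ((Equiv.funSplitAt i0 (Fin 3)).symm p) i0 = p.1 := by
    intro p; simp [Equiv.funSplitAt, Equiv.piSplitAt]
  calc ∑ p : Fin 3 × ({j // j ≠ i0} → Fin 3), f (((Equiv.funSplitAt i0 (Fin 3)).symm p) i0)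
      = ∑ p : Fin 3 × ({j // j ≠ i0} → Fin 3), f p.1 := by
        apply Finset.sum_congr rfl; intro p _; rw [h]
    _ = ∑ v : Fin 3, ∑ _ρ : ({j // j ≠ i0} → Fin 3), f v := by
        rw [Fintype.sum_prod_type]
    _ = ∑ v : Fin 3, Fintype.card ({j // j ≠ i0} → Fin 3) • f v := by
        simp [Finset.sum_const]
    _ = _ := by rw [← Finset.smul_sum]

end Counting

set_option linter.unusedSectionVars false
section Counting2
variable {ι : Type} [Fintype ι] [DecidableEq ι]

def splitTwo (i1 i2 : ι) (h : i1 ≠ i2) :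
    (ι → Fin 3) ≃ (Fin 3 × Fin 3 × ({j // j ≠ i1 ∧ j ≠ i2} → Fin 3)) where
  toFun σ := (σ i1, σ i2, fun j => σ j.1)
  invFun p := fun i => if h1 : i = i1 then p.1 else if h2 : i = i2 then p.2.1
    else p.2.2 ⟨i, h1, h2⟩
  left_inv σ := by
    funext i
    by_cases h1 : i = i1
    · subst h1; simp
    · by_cases h2 : i = i2
      · subst h2; simp [h1]
      · simp [h1, h2]
  right_inv p := by
    obtain ⟨v1, v2, ρ⟩ := p
    refine Prod.ext ?_ (Prod.ext ?_ ?_)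
    · simp
    · have : i2 ≠ i1 := h.symm
      simp [this]
    · funext j
      obtain ⟨j, hj1, hj2⟩ := j
      simp [hj1, hj2]

lemma splitTwo_symm_fst (i1 i2 : ι) (h : i1 ≠ i2) (v1 v2 : Fin 3)
    (ρ : {j // j ≠ i1 ∧ j ≠ i2} → Fin 3) :
    (splitTwo i1 i2 h).symm (v1, v2, ρ) i1 = v1 := by
  simp [splitTwo]

lemma splitTwo_symm_snd (i1 i2 : ι) (h : i1 ≠ i2) (v1 v2 : Fin 3)
    (ρ : {j // j ≠ i1 ∧ j ≠ i2} → Fin 3) :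
    (splitTwo i1 i2 h).symm (v1, v2, ρ) i2 = v2 := by
  have : i2 ≠ i1 := h.symm
  simp [splitTwo, this]

lemma splitTwo_symm_other (i1 i2 : ι) (h : i1 ≠ i2) (v1 v2 : Fin 3)
    (ρ : {j // j ≠ i1 ∧ j ≠ i2} → Fin 3) {j : ι} (h1 : j ≠ i1) (h2 : j ≠ i2) :
    (splitTwo i1 i2 h).symm (v1, v2, ρ) j = ρ ⟨j, h1, h2⟩ := by
  simp [splitTwo, h1, h2]

lemma split2_card (i1 i2 : ι) (h : i1 ≠ i2) :
    Fintype.card (ι → Fin 3) = 9 * Fintype.card ({j // j ≠ i1 ∧ j ≠ i2} → Fin 3) := by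
  rw [Fintype.card_congr (splitTwo i1 i2 h), Fintype.card_prod, Fintype.card_prod,
    Fintype.card_fin]
  ring

lemma split2_sum {M : Type} [AddCommMonoid M] (i1 i2 : ι) (h : i1 ≠ i2)
    (G : (ι → Fin 3) → M) :
    ∑ σ : ι → Fin 3, G σ
      = ∑ ρ : ({j // j ≠ i1 ∧ j ≠ i2} → Fin 3), ∑ v1 : Fin 3, ∑ v2 : Fin 3,
          G ((splitTwo i1 i2 h).symm (v1, v2, ρ)) := by
  rw [← Equiv.sum_comp (splitTwo i1 i2 h).symm G, Fintype.sum_prod_type]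
  have h1 : ∀ v1 : Fin 3,
      ∑ q : Fin 3 × ({j // j ≠ i1 ∧ j ≠ i2} → Fin 3), G ((splitTwo i1 i2 h).symm (v1, q))
        = ∑ ρ : ({j // j ≠ i1 ∧ j ≠ i2} → Fin 3), ∑ v2 : Fin 3,
            G ((splitTwo i1 i2 h).symm (v1, v2, ρ)) := by
    intro v1; rw [Fintype.sum_prod_type, Finset.sum_comm]
  simp only [h1]
  rw [Finset.sum_comm]

end Counting2

lemma key_abs (a1 a2 D : ℤ) (h1 : a1 ≠ 0) (h2 : a2 ≠ 0) :
    (4:ℤ) ≤ |D| + 2 * |a2 + D| + 2 * |a1 + D| + 4 * |a1 + a2 + D| := by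
  rcases eq_or_ne (a1 + a2 + D) 0 with h | h
  · have e1 : a1 + D = -a2 := by linarith
    have e2 : a2 + D = -a1 := by linarith
    have k1 : 1 ≤ |a1 + D| := by rw [e1, abs_neg]; exact Int.one_le_abs h2
    have k2 : 1 ≤ |a2 + D| := by rw [e2, abs_neg]; exact Int.one_le_abs h1
    have := abs_nonneg D
    have := abs_nonneg (a1 + a2 + D)
    linarith
  · have k : 1 ≤ |a1 + a2 + D| := Int.one_le_abs h
    have := abs_nonneg D
    have := abs_nonneg (a1 + D)
    have := abs_nonneg (a2 + D)
    linarith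

example (a1 a2 D : ℤ) :
    ∑ v1 : Fin 3, ∑ v2 : Fin 3,
      |(if v1 ≠ 0 then a1 else 0) + (if v2 ≠ 0 then a2 else 0) + D|
    = |D| + 2 * |a2 + D| + 2 * |a1 + D| + 4 * |a1 + a2 + D| := by
  have t1 : ((1:Fin 3) ≠ 0) := by decide
  have t2 : ((2:Fin 3) ≠ 0) := by decide
  rw [Fin.sum_univ_three]
  rw [Fin.sum_univ_three, Fin.sum_univ_three, Fin.sum_univ_three]
  simp [t1, t2]
  ring_nf
lemma inner_nine (a1 a2 D : ℤ) :
    ∑ v1 : Fin 3, ∑ v2 : Fin 3,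
      |(if v1 ≠ 0 then a1 else 0) + (if v2 ≠ 0 then a2 else 0) + D|
    = |D| + 2 * |a2 + D| + 2 * |a1 + D| + 4 * |a1 + a2 + D| := by
  have t1 : ((1:Fin 3) ≠ 0) := by decide
  have t2 : ((2:Fin 3) ≠ 0) := by decide
  rw [Fin.sum_univ_three]
  rw [Fin.sum_univ_three, Fin.sum_univ_three, Fin.sum_univ_three]
  simp [t1, t2]
  ring_nf

set_option linter.unusedSectionVars false in
lemma L2gen {ι : Type} [Fintype ι] [DecidableEq ι] {κ : Type} [DecidableEq κ]
    (K : Finset κ) (hK : K.Nonempty) (g : κ → ι) (hinj : Set.InjOn g K)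
    (a : κ → ℤ) (ha : ∀ C ∈ K, a C ≠ 0) :
    4 * (Fintype.card (ι → Fin 3) : ℤ)
      ≤ 9 * ∑ σ : ι → Fin 3, |∑ C ∈ K, (if σ (g C) ≠ 0 then a C else 0)| := by
  rcases eq_or_lt_of_le (Nat.succ_le_of_lt hK.card_pos) with h1 | h1
  · -- card = 1
    obtain ⟨C0, rfl⟩ := Finset.card_eq_one.mp h1.symm
    have hsum : ∀ σ : ι → Fin 3, (∑ C ∈ ({C0} : Finset κ), (if σ (g C) ≠ 0 then a C else 0))
        = (if σ (g C0) ≠ 0 then a C0 else 0) := by intro σ; simp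
    simp only [hsum]
    rw [split1_sum (g C0) (fun v => |if v ≠ 0 then a C0 else 0|)]
    have hv : ∑ v : Fin 3, |if v ≠ 0 then a C0 else 0| = 2 * |a C0| := by
      have t1 : ((1:Fin 3) ≠ 0) := by decide
      have t2 : ((2:Fin 3) ≠ 0) := by decide
      rw [Fin.sum_univ_three]
      simp [t1, t2]; ring
    rw [hv, split1_card (g C0)]
    have hab : 1 ≤ |a C0| := Int.one_le_abs (ha C0 (Finset.mem_singleton_self C0))
    set m := Fintype.card ({j // j ≠ g C0} → Fin 3) with hm
    rw [nsmul_eq_mul]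
    push_cast
    nlinarith [Nat.cast_nonneg (α := ℤ) m]
  · -- card ≥ 2
    obtain ⟨C1, hC1, C2, hC2, hne⟩ := Finset.one_lt_card.mp h1
    have hgne : g C1 ≠ g C2 := fun h => hne (hinj hC1 hC2 h)
    have hC2' : C2 ∈ K.erase C1 := Finset.mem_erase.mpr ⟨hne.symm, hC2⟩
    set K' := (K.erase C1).erase C2 with hK'
    have hdecomp : ∀ σ : ι → Fin 3, (∑ C ∈ K, (if σ (g C) ≠ 0 then a C else 0))
        = (if σ (g C1) ≠ 0 then a C1 else 0) + (if σ (g C2) ≠ 0 then a C2 else 0)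
          + ∑ C ∈ K', (if σ (g C) ≠ 0 then a C else 0) := by
      intro σ
      rw [← Finset.add_sum_erase _ _ hC1, ← Finset.add_sum_erase _ _ hC2', add_assoc]
    rw [split2_sum (g C1) (g C2) hgne]
    have hbound : ∀ ρ : ({j // j ≠ g C1 ∧ j ≠ g C2} → Fin 3),
        (4:ℤ) ≤ ∑ v1 : Fin 3, ∑ v2 : Fin 3,
          |∑ C ∈ K, (if ((splitTwo (g C1) (g C2) hgne).symm (v1, v2, ρ)) (g C) ≠ 0
              then a C else 0)| := by
      intro ρ
      set D := ∑ C ∈ K', (if ((splitTwo (g C1) (g C2) hgne).symm (0, 0, ρ)) (g C) ≠ 0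
          then a C else 0) with hD
      have hZ : ∀ v1 v2 : Fin 3,
          (∑ C ∈ K, (if ((splitTwo (g C1) (g C2) hgne).symm (v1, v2, ρ)) (g C) ≠ 0
              then a C else 0))
          = (if v1 ≠ 0 then a C1 else 0) + (if v2 ≠ 0 then a C2 else 0) + D := by
        intro v1 v2
        rw [hdecomp]
        rw [splitTwo_symm_fst, splitTwo_symm_snd]
        congr 1
        apply Finset.sum_congr rfl
        intro C hC
        have hCK : C ∈ K := Finset.mem_of_mem_erase (Finset.mem_of_mem_erase hC)
        have hne1 : g C ≠ g C1 := fun h =>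
          (Finset.mem_erase.mp (Finset.mem_of_mem_erase hC)).1 (hinj hCK hC1 h)
        have hne2 : g C ≠ g C2 := fun h => (Finset.mem_erase.mp hC).1 (hinj hCK hC2 h)
        rw [splitTwo_symm_other _ _ _ _ _ _ hne1 hne2,
          splitTwo_symm_other _ _ _ _ _ _ hne1 hne2]
      simp only [hZ]
      rw [inner_nine]
      exact key_abs (a C1) (a C2) D (ha C1 hC1) (ha C2 hC2)
    have hsum : (4:ℤ) * Fintype.card ({j // j ≠ g C1 ∧ j ≠ g C2} → Fin 3)
        ≤ ∑ ρ : ({j // j ≠ g C1 ∧ j ≠ g C2} → Fin 3), ∑ v1 : Fin 3, ∑ v2 : Fin 3,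
          |∑ C ∈ K, (if ((splitTwo (g C1) (g C2) hgne).symm (v1, v2, ρ)) (g C) ≠ 0
              then a C else 0)| := by
      calc (4:ℤ) * Fintype.card ({j // j ≠ g C1 ∧ j ≠ g C2} → Fin 3)
          = ∑ _ρ : ({j // j ≠ g C1 ∧ j ≠ g C2} → Fin 3), (4:ℤ) := by
            simp [Finset.sum_const, mul_comm]
        _ ≤ _ := Finset.sum_le_sum (fun ρ _ => hbound ρ)
    rw [split2_card (g C1) (g C2) hgne]
    push_cast
    linarith
section HardPart
set_option linter.unusedSectionVars false

variable (F : Finset Clause) (w : Clause → ℕ)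

/-- Sample space: each unit variable gets a value in `Fin 3` (true iff nonzero). -/
abbrev OmegaF := {x // x ∈ unitVars F} → Fin 3

/-- Two-literal hard clauses on the non-unit variable `y`. -/
noncomputable def F2yF (y : ℕ) : Finset Clause :=
  F.filter (fun C => ∃ x ∈ unitVars F, ∃ b : Bool, C = {(x, false), (y, b)})

/-- Weight of clauses on `y` left unsatisfied if `y` is set to `c` (given `σ`). -/
noncomputable def LossZ (σ : OmegaF F) (y : ℕ) (c : Bool) : ℤ :=
  ∑ C ∈ F2yF F y,
    if (∃ l ∈ C, ∃ h : l.1 ∈ unitVars F, σ ⟨l.1, h⟩ ≠ 0) ∧ (y, c) ∉ C then (w C : ℤ) else 0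

/-- The best value for `y` given `σ`. -/
noncomputable def bestb (σ : OmegaF F) (y : ℕ) : Bool :=
  if LossZ F w σ y true ≤ LossZ F w σ y false then true else false

/-- The assignment induced by a sample `σ`. -/
noncomputable def tauF (σ : OmegaF F) : ℕ → Bool :=
  fun v => if h : v ∈ unitVars F then (if σ ⟨v, h⟩ = 0 then false else true)
    else bestb F w σ v

lemma mem_unitVars_iff {x : ℕ} :
    x ∈ unitVars F ↔ ∃ C ∈ F, C.card = 1 ∧ x ∈ C.image Prod.fst := by
  unfold unitVars
  rw [Finset.mem_sup]
  constructor
  · rintro ⟨C, hC, hx⟩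
    rw [Finset.mem_filter] at hC
    exact ⟨C, hC.1, hC.2, hx⟩
  · rintro ⟨C, hC, hc, hx⟩
    exact ⟨C, Finset.mem_filter.mpr ⟨hC, hc⟩, hx⟩

lemma unit_clause_mem (hhard : HardFormula F) {x : ℕ} (hx : x ∈ unitVars F) :
    ({(x, true)} : Clause) ∈ F := by
  obtain ⟨C, hCF, hcard, hximg⟩ := (mem_unitVars_iff F).mp hx
  rcases hhard C hCF with ⟨x', hC⟩ | ⟨x', hx', y, hy, b, hC⟩
  · subst hC
    simp only [Finset.image_singleton, Finset.mem_singleton] at hximg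
    subst hximg
    exact hCF
  · exfalso
    have hxy : x' ≠ y := fun h => hy (h ▸ hx')
    have : ((x', false) : ℕ × Bool) ≠ (y, b) := fun h => hxy (congrArg Prod.fst h)
    rw [hC, Finset.card_pair this] at hcard
    omega

lemma not_both_polarities (h3 : Sat3 F) (hhard : HardFormula F) {x y : ℕ}
    (hx : x ∈ unitVars F)
    (h1 : ({(x, false), (y, true)} : Clause) ∈ F)
    (h2 : ({(x, false), (y, false)} : Clause) ∈ F) : False := by
  obtain ⟨τ, hs0, hs1, hs2⟩ := h3 _ (unit_clause_mem F hhard hx) _ h1 _ h2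
  obtain ⟨l, hl, he⟩ := hs0
  rw [Finset.mem_singleton] at hl
  subst hl
  obtain ⟨l1, hl1, he1⟩ := hs1
  obtain ⟨l2, hl2, he2⟩ := hs2
  rcases Finset.mem_insert.mp hl1 with h | h
  · subst h; simp_all
  · rw [Finset.mem_singleton] at h; subst h
    rcases Finset.mem_insert.mp hl2 with h | h
    · subst h; simp_all
    · rw [Finset.mem_singleton] at h; subst h; simp_all

lemma mem_F2yF {y : ℕ} {C : Clause} :
    C ∈ F2yF F y ↔ C ∈ F ∧ ∃ x, x ∈ unitVars F ∧ ∃ b : Bool, C = {(x, false), (y, b)} := by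
  unfold F2yF
  rw [Finset.mem_filter]

lemma mem_pair_y {x y : ℕ} {b c : Bool} (hxy : x ≠ y) :
    ((y, c) ∈ ({(x, false), (y, b)} : Clause)) ↔ c = b := by
  constructor
  · intro hc
    rcases Finset.mem_insert.mp hc with h | h
    · exact absurd (congrArg Prod.fst h) hxy.symm
    · rw [Finset.mem_singleton] at h
      exact congrArg Prod.snd h
  · rintro rfl
    exact Finset.mem_insert_of_mem (Finset.mem_singleton_self _)

lemma alive_iff (σ : OmegaF F) {x y : ℕ} {b : Bool} (hx : x ∈ unitVars F)
    (hy : y ∉ unitVars F) :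
    (∃ l ∈ ({(x, false), (y, b)} : Clause), ∃ h : l.1 ∈ unitVars F, σ ⟨l.1, h⟩ ≠ 0)
      ↔ σ ⟨x, hx⟩ ≠ 0 := by
  constructor
  · rintro ⟨l, hl, h, hσ⟩
    rcases Finset.mem_insert.mp hl with rfl | hl
    · exact hσ
    · rw [Finset.mem_singleton] at hl; subst hl; exact absurd h hy
  · intro h
    exact ⟨(x, false), Finset.mem_insert_self _ _, hx, h⟩

lemma tau_unit_false (σ : OmegaF F) {x : ℕ} (hx : x ∈ unitVars F) :
    tauF F w σ x = false ↔ σ ⟨x, hx⟩ = 0 := by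
  unfold tauF
  rw [dif_pos hx]
  by_cases h : σ ⟨x, hx⟩ = 0 <;> simp [h]

lemma tau_nonunit (σ : OmegaF F) {y : ℕ} (hy : y ∉ unitVars F) :
    tauF F w σ y = bestb F w σ y := dif_neg hy

lemma satC2_iff (σ : OmegaF F) {x y : ℕ} {b : Bool} (hx : x ∈ unitVars F)
    (hy : y ∉ unitVars F) :
    SatC (tauF F w σ) ({(x, false), (y, b)} : Clause)
      ↔ (σ ⟨x, hx⟩ = 0 ∨ bestb F w σ y = b) := by
  constructor
  · rintro ⟨l, hl, he⟩
    rcases Finset.mem_insert.mp hl with rfl | hl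
    · left; exact (tau_unit_false F w σ hx).mp he
    · rw [Finset.mem_singleton] at hl; subst hl
      right; rw [← tau_nonunit F w σ hy]; exact he
  · rintro (h | h)
    · exact ⟨(x, false), Finset.mem_insert_self _ _, (tau_unit_false F w σ hx).mpr h⟩
    · refine ⟨(y, b), ?_, ?_⟩
      · simp
      · rw [tau_nonunit F w σ hy]; exact h

end HardPart
section HardPart2
set_option linter.unusedSectionVars false

variable (F : Finset Clause) (w : Clause → ℕ)

lemma loss_nonneg (σ : OmegaF F) (y : ℕ) (c : Bool) : 0 ≤ LossZ F w σ y c := by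
  unfold LossZ
  apply Finset.sum_nonneg
  intro C _
  split <;> positivity

lemma loss_add {y : ℕ} (hy : y ∉ unitVars F) (σ : OmegaF F) :
    LossZ F w σ y true + LossZ F w σ y false
      = ∑ C ∈ F2yF F y,
          (if (∃ l ∈ C, ∃ h : l.1 ∈ unitVars F, σ ⟨l.1, h⟩ ≠ 0) then (w C : ℤ) else 0) := by
  unfold LossZ
  rw [← Finset.sum_add_distrib]
  apply Finset.sum_congr rfl
  intro C hC
  obtain ⟨hCF, x, hx, b, rfl⟩ := (mem_F2yF F).mp hC
  have hxy : x ≠ y := fun h => hy (h ▸ hx)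
  by_cases hal : (∃ l ∈ ({(x, false), (y, b)} : Clause), ∃ h : l.1 ∈ unitVars F, σ ⟨l.1, h⟩ ≠ 0)
  · cases b
    · rw [if_pos ⟨hal, fun hm => by simpa using (mem_pair_y hxy).mp hm⟩,
        if_neg (fun hc => hc.2 ((mem_pair_y hxy).mpr rfl)), if_pos hal]
      ring
    · rw [if_neg (fun hc => hc.2 ((mem_pair_y hxy).mpr rfl)),
        if_pos ⟨hal, fun hm => by simpa using (mem_pair_y hxy).mp hm⟩, if_pos hal]
      ring
  · rw [if_neg (fun hc => hal hc.1), if_neg (fun hc => hal hc.1), if_neg hal]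
    ring

lemma loss_sub {y : ℕ} (hy : y ∉ unitVars F) (σ : OmegaF F) :
    LossZ F w σ y true - LossZ F w σ y false
      = ∑ C ∈ F2yF F y,
          (if (∃ l ∈ C, ∃ h : l.1 ∈ unitVars F, σ ⟨l.1, h⟩ ≠ 0)
            then (if (y, true) ∈ C then -(w C : ℤ) else (w C : ℤ)) else 0) := by
  unfold LossZ
  rw [← Finset.sum_sub_distrib]
  apply Finset.sum_congr rfl
  intro C hC
  obtain ⟨hCF, x, hx, b, rfl⟩ := (mem_F2yF F).mp hC
  have hxy : x ≠ y := fun h => hy (h ▸ hx)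
  by_cases hal : (∃ l ∈ ({(x, false), (y, b)} : Clause), ∃ h : l.1 ∈ unitVars F, σ ⟨l.1, h⟩ ≠ 0)
  · cases b
    · rw [if_pos ⟨hal, fun hm => by simpa using (mem_pair_y hxy).mp hm⟩,
        if_neg (fun hc => hc.2 ((mem_pair_y hxy).mpr rfl)), if_pos hal,
        if_neg (fun hm => by simpa using (mem_pair_y hxy).mp hm)]
      ring
    · rw [if_neg (fun hc => hc.2 ((mem_pair_y hxy).mpr rfl)),
        if_pos ⟨hal, fun hm => by simpa using (mem_pair_y hxy).mp hm⟩, if_pos hal,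
        if_pos ((mem_pair_y hxy).mpr rfl)]
      ring
  · rw [if_neg (fun hc => hal hc.1), if_neg (fun hc => hal hc.1), if_neg hal]
    ring

lemma unsat2_eq {y : ℕ} (hy : y ∉ unitVars F) (σ : OmegaF F) :
    ∑ C ∈ F2yF F y, (if SatC (tauF F w σ) C then 0 else (w C : ℤ))
      = min (LossZ F w σ y true) (LossZ F w σ y false) := by
  have h1 : ∑ C ∈ F2yF F y, (if SatC (tauF F w σ) C then 0 else (w C : ℤ))
      = LossZ F w σ y (bestb F w σ y) := by
    unfold LossZ
    apply Finset.sum_congr rfl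
    intro C hC
    obtain ⟨hCF, x, hx, b, rfl⟩ := (mem_F2yF F).mp hC
    have hxy : x ≠ y := fun h => hy (h ▸ hx)
    by_cases hs : SatC (tauF F w σ) ({(x, false), (y, b)} : Clause)
    · rw [if_pos hs, if_neg]
      rintro ⟨hal, hnm⟩
      rcases (satC2_iff F w σ hx hy).mp hs with h | h
      · exact ((alive_iff F σ hx hy).mp hal) h
      · exact hnm ((mem_pair_y hxy).mpr h)
    · rw [if_neg hs, if_pos]
      refine ⟨?_, ?_⟩
      · rcases eq_or_ne (σ ⟨x, hx⟩) 0 with h | h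
        · exact absurd ((satC2_iff F w σ hx hy).mpr (Or.inl h)) hs
        · exact (alive_iff F σ hx hy).mpr h
      · intro hm
        exact hs ((satC2_iff F w σ hx hy).mpr (Or.inr ((mem_pair_y hxy).mp hm)))
  rw [h1]
  unfold bestb
  split_ifs with h
  · rw [min_eq_left h]
  · rw [min_eq_right (le_of_not_ge h)]

end HardPart2
section HardPart3
set_option linter.unusedSectionVars false

variable (F : Finset Clause) (w : Clause → ℕ)

lemma wtZ (G : Finset Clause) : (wt w G : ℤ) = ∑ C ∈ G, (w C : ℤ) := by
  unfold wt; push_cast; rfl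

lemma tau_unit_true (σ : OmegaF F) {x : ℕ} (hx : x ∈ unitVars F) :
    tauF F w σ x = true ↔ σ ⟨x, hx⟩ ≠ 0 := by
  unfold tauF
  rw [dif_pos hx]
  by_cases h : σ ⟨x, hx⟩ = 0 <;> simp [h]

lemma unit_count (hhard : HardFormula F) :
    3 * ∑ σ : OmegaF F, ∑ C ∈ F.filter (fun C => C.card = 1),
        (if SatC (tauF F w σ) C then 0 else (w C : ℤ))
      = (Fintype.card (OmegaF F) : ℤ) * (wt w (F.filter (fun C => C.card = 1)) : ℤ) := by
  rw [Finset.sum_comm, Finset.mul_sum, wtZ, Finset.mul_sum]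
  apply Finset.sum_congr rfl
  intro C hC
  obtain ⟨hCF, hcard⟩ := Finset.mem_filter.mp hC
  obtain ⟨x, rfl⟩ : ∃ x, C = {(x, true)} := by
    rcases hhard C hCF with h | ⟨x', hx', y, hy, b, hC2⟩
    · exact h
    · exfalso
      have hxy : x' ≠ y := fun h => hy (h ▸ hx')
      have : ((x', false) : ℕ × Bool) ≠ (y, b) := fun h => hxy (congrArg Prod.fst h)
      rw [hC2, Finset.card_pair this] at hcard
      omega
  have hx : x ∈ unitVars F := (mem_unitVars_iff F).mpr ⟨_, hCF, hcard, by simp⟩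
  have hsat : ∀ σ : OmegaF F,
      (if SatC (tauF F w σ) ({(x, true)} : Clause) then 0 else ((w {(x, true)} : ℕ) : ℤ))
        = (fun v : Fin 3 => if v ≠ 0 then 0 else ((w {(x, true)} : ℕ) : ℤ)) (σ ⟨x, hx⟩) := by
    intro σ
    have : SatC (tauF F w σ) ({(x, true)} : Clause) ↔ σ ⟨x, hx⟩ ≠ 0 := by
      rw [← tau_unit_true F w σ hx]
      constructor
      · rintro ⟨l, hl, he⟩
        rw [Finset.mem_singleton] at hl; subst hl; exact he
      · intro h; exact ⟨(x, true), Finset.mem_singleton_self _, h⟩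
    by_cases h : σ ⟨x, hx⟩ = 0 <;> simp [this, h]
  rw [Finset.sum_congr rfl (fun σ _ => hsat σ)]
  rw [split1_sum (⟨x, hx⟩ : {v // v ∈ unitVars F})
    (fun v : Fin 3 => if v ≠ 0 then 0 else ((w {(x, true)} : ℕ) : ℤ))]
  have hv : ∑ v : Fin 3, (if v ≠ 0 then 0 else ((w {(x, true)} : ℕ) : ℤ))
      = ((w {(x, true)} : ℕ) : ℤ) := by
    have t1 : ((1:Fin 3) ≠ 0) := by decide
    have t2 : ((2:Fin 3) ≠ 0) := by decide
    rw [Fin.sum_univ_three]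
    simp [t1, t2]
  rw [hv]
  have hcardeq := split1_card (ι := {v // v ∈ unitVars F}) (⟨x, hx⟩ : {v // v ∈ unitVars F})
  rw [nsmul_eq_mul]
  rw [show (Fintype.card (OmegaF F) : ℤ) = ((Fintype.card ({v // v ∈ unitVars F} → Fin 3) : ℕ) : ℤ) from rfl]
  rw [hcardeq]
  push_cast
  ring

lemma y_count (h3 : Sat3 F) (hhard : HardFormula F) (hw : ∀ C ∈ F, 0 < w C)
    {y : ℕ} (hyv : y ∈ vars F) (hy : y ∉ unitVars F) :
    9 * ∑ σ : OmegaF F, min (LossZ F w σ y true) (LossZ F w σ y false)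
      ≤ (Fintype.card (OmegaF F) : ℤ) * (3 * (wt w (F2yF F y) : ℤ) - 2) := by
  -- F2yF F y is nonempty
  obtain ⟨C0, hC0⟩ : (F2yF F y).Nonempty := by
    rw [vars, Finset.mem_sup] at hyv
    obtain ⟨C, hCF, hyC⟩ := hyv
    rcases hhard C hCF with ⟨x, rfl⟩ | ⟨x, hx, y', hy', b, rfl⟩
    · exfalso
      simp only [Finset.image_singleton, Finset.mem_singleton] at hyC
      subst hyC
      exact hy ((mem_unitVars_iff F).mpr ⟨_, hCF, rfl, by simp⟩)
    · simp only [Finset.image_insert, Finset.image_singleton, Finset.mem_insert,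
        Finset.mem_singleton] at hyC
      rcases hyC with rfl | rfl
      · exact absurd hx hy
      · exact ⟨_, (mem_F2yF F).mpr ⟨hCF, x, hx, b, rfl⟩⟩
  obtain ⟨x0, hx0, b0, hC0eq⟩ := ((mem_F2yF F).mp hC0).2
  -- choice of the unit variable of each clause
  have hall : ∀ C : Clause, ∃ xb : ℕ × Bool, xb.1 ∈ unitVars F ∧
      (C ∈ F2yF F y → C = {(xb.1, false), (y, xb.2)}) := by
    intro C
    by_cases h : C ∈ F2yF F y
    · obtain ⟨hCF, x, hx, b, e⟩ := (mem_F2yF F).mp h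
      exact ⟨(x, b), hx, fun _ => e⟩
    · exact ⟨(x0, b0), hx0, fun hc => absurd hc h⟩
  choose xb hxb1 hxb2 using hall
  set g : Clause → {v // v ∈ unitVars F} := fun C => ⟨(xb C).1, hxb1 C⟩ with hg
  have hgspec : ∀ C ∈ F2yF F y, C = {((g C : ℕ), false), (y, (xb C).2)} :=
    fun C hC => hxb2 C hC
  set a : Clause → ℤ := fun C => if (y, true) ∈ C then -(w C : ℤ) else (w C : ℤ) with ha'
  have ha : ∀ C ∈ F2yF F y, a C ≠ 0 := by
    intro C hC
    have hwC : 0 < w C := hw C ((mem_F2yF F).mp hC).1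
    show (if (y, true) ∈ C then -(w C : ℤ) else (w C : ℤ)) ≠ 0
    split <;> omega
  have hinj : Set.InjOn g (F2yF F y) := by
    intro C1 h1 C2 h2 he
    have h1' : C1 ∈ F2yF F y := h1
    have h2' : C2 ∈ F2yF F y := h2
    have e1 := hgspec C1 h1'
    have e2 := hgspec C2 h2'
    have hcoe : ((g C1 : ℕ)) = ((g C2 : ℕ)) := congrArg Subtype.val he
    by_cases hb : (xb C1).2 = (xb C2).2
    · rw [e1, e2, hcoe, hb]
    · exfalso
      have hF1 : C1 ∈ F := ((mem_F2yF F).mp h1').1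
      have hF2 : C2 ∈ F := ((mem_F2yF F).mp h2').1
      have m1 : ({((g C1 : ℕ), false), (y, (xb C1).2)} : Clause) ∈ F := e1 ▸ hF1
      have m2 : ({((g C1 : ℕ), false), (y, (xb C2).2)} : Clause) ∈ F := by
        rw [hcoe]; exact e2 ▸ hF2
      rcases Bool.eq_false_or_eq_true (xb C1).2 with hb1 | hb1 <;>
        rcases Bool.eq_false_or_eq_true (xb C2).2 with hb2 | hb2
      · exact hb (hb1.trans hb2.symm)
      · rw [hb1] at m1; rw [hb2] at m2
        exact not_both_polarities F h3 hhard (g C1).2 m1 m2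
      · rw [hb1] at m1; rw [hb2] at m2
        exact not_both_polarities F h3 hhard (g C1).2 m2 m1
      · exact hb (hb1.trans hb2.symm)
  have hZ : ∀ σ : OmegaF F, LossZ F w σ y true - LossZ F w σ y false
      = ∑ C ∈ F2yF F y, (if σ (g C) ≠ 0 then a C else 0) := by
    intro σ
    rw [loss_sub F w hy σ]
    apply Finset.sum_congr rfl
    intro C hC
    have e := hgspec C hC
    have halive : (∃ l ∈ C, ∃ h : l.1 ∈ unitVars F, σ ⟨l.1, h⟩ ≠ 0) ↔ σ (g C) ≠ 0 := by
      conv_lhs => rw [e]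
      exact alive_iff F σ (g C).2 hy
    by_cases h : σ (g C) ≠ 0
    · rw [if_pos (halive.mpr h), if_pos h]
    · rw [if_neg (fun hc => h (halive.mp hc)), if_neg h]
  have hB : 4 * (Fintype.card (OmegaF F) : ℤ)
      ≤ 9 * ∑ σ : OmegaF F, |LossZ F w σ y true - LossZ F w σ y false| := by
    simp only [hZ]
    exact L2gen (F2yF F y) ⟨C0, hC0⟩ g hinj a ha
  have hA : 3 * ∑ σ : OmegaF F, (LossZ F w σ y true + LossZ F w σ y false)
      = 2 * (Fintype.card (OmegaF F) : ℤ) * (wt w (F2yF F y) : ℤ) := by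
    simp only [loss_add F w hy]
    rw [Finset.sum_comm, Finset.mul_sum, wtZ]
    rw [show 2 * (Fintype.card (OmegaF F) : ℤ) * (∑ C ∈ F2yF F y, (w C : ℤ))
      = ∑ C ∈ F2yF F y, 2 * (Fintype.card (OmegaF F) : ℤ) * (w C : ℤ) from Finset.mul_sum _ _ _]
    apply Finset.sum_congr rfl
    intro C hC
    have e := hgspec C hC
    have hsat : ∀ σ : OmegaF F,
        (if (∃ l ∈ C, ∃ h : l.1 ∈ unitVars F, σ ⟨l.1, h⟩ ≠ 0) then (w C : ℤ) else 0)
          = (fun v : Fin 3 => if v ≠ 0 then (w C : ℤ) else 0) (σ (g C)) := by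
      intro σ
      have halive : (∃ l ∈ C, ∃ h : l.1 ∈ unitVars F, σ ⟨l.1, h⟩ ≠ 0) ↔ σ (g C) ≠ 0 := by
        conv_lhs => rw [e]
        exact alive_iff F σ (g C).2 hy
      by_cases h : σ (g C) ≠ 0 <;> simp [halive, h]
    rw [Finset.sum_congr rfl (fun σ _ => hsat σ)]
    rw [split1_sum (g C) (fun v : Fin 3 => if v ≠ 0 then (w C : ℤ) else 0)]
    have hv : ∑ v : Fin 3, (if v ≠ 0 then (w C : ℤ) else 0) = 2 * (w C : ℤ) := by
      have t1 : ((1:Fin 3) ≠ 0) := by decide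
      have t2 : ((2:Fin 3) ≠ 0) := by decide
      rw [Fin.sum_univ_three]
      simp [t1, t2]
      ring
    rw [hv]
    have hcardeq := split1_card (ι := {v // v ∈ unitVars F}) (g C)
    rw [nsmul_eq_mul]
    rw [show (Fintype.card (OmegaF F) : ℤ)
      = ((Fintype.card ({v // v ∈ unitVars F} → Fin 3) : ℕ) : ℤ) from rfl]
    rw [hcardeq]
    push_cast
    ring
  have hmin : ∀ σ : OmegaF F, 2 * min (LossZ F w σ y true) (LossZ F w σ y false)
      = (LossZ F w σ y true + LossZ F w σ y false)
        - |LossZ F w σ y true - LossZ F w σ y false| := by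
    intro σ
    have h1 := max_sub_min_eq_abs (LossZ F w σ y true) (LossZ F w σ y false)
    rw [abs_sub_comm] at h1
    have h2 := min_add_max (LossZ F w σ y true) (LossZ F w σ y false)
    linarith
  have e1 : ∑ σ : OmegaF F, 2 * min (LossZ F w σ y true) (LossZ F w σ y false)
      = ∑ σ : OmegaF F, (LossZ F w σ y true + LossZ F w σ y false)
        - ∑ σ : OmegaF F, |LossZ F w σ y true - LossZ F w σ y false| := by
    simp only [hmin]
    rw [Finset.sum_sub_distrib]
  have e2 : ∑ σ : OmegaF F, 2 * min (LossZ F w σ y true) (LossZ F w σ y false)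
      = 2 * ∑ σ : OmegaF F, min (LossZ F w σ y true) (LossZ F w σ y false) := by
    rw [Finset.mul_sum]
  linarith

end HardPart3
section Final
set_option linter.unusedSectionVars false

variable (F : Finset Clause) (w : Clause → ℕ)

lemma partitionF (hhard : HardFormula F) (f : Clause → ℤ) :
    ∑ C ∈ F, f C = ∑ C ∈ F.filter (fun C => C.card = 1), f C
      + ∑ y ∈ vars F \ unitVars F, ∑ C ∈ F2yF F y, f C := by
  have hset : F.filter (fun C => ¬ C.card = 1) = (vars F \ unitVars F).biUnion (F2yF F) := by
    ext C
    simp only [Finset.mem_filter, Finset.mem_biUnion, Finset.mem_sdiff]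
    constructor
    · rintro ⟨hCF, hcard⟩
      rcases hhard C hCF with ⟨x, rfl⟩ | ⟨x, hx, y, hy, b, rfl⟩
      · exact absurd (Finset.card_singleton _) hcard
      · refine ⟨y, ⟨?_, hy⟩, (mem_F2yF F).mpr ⟨hCF, x, hx, b, rfl⟩⟩
        exact Finset.mem_sup.mpr ⟨_, hCF, by simp⟩
    · rintro ⟨y, ⟨hyv, hy⟩, hC⟩
      obtain ⟨hCF, x, hx, b, hCe⟩ := (mem_F2yF F).mp hC
      have hxy : x ≠ y := fun h => hy (h ▸ hx)
      have hne : ((x, false) : ℕ × Bool) ≠ (y, b) := fun h => hxy (congrArg Prod.fst h)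
      refine ⟨hCF, ?_⟩
      rw [hCe, Finset.card_pair hne]
      omega
  have hdisj : (↑(vars F \ unitVars F) : Set ℕ).PairwiseDisjoint (F2yF F) := by
    intro y1 hy1 y2 hy2 hne
    apply Finset.disjoint_left.mpr
    intro C h1 h2
    obtain ⟨hCF1, x1, hx1, b1, e1⟩ := (mem_F2yF F).mp h1
    obtain ⟨hCF2, x2, hx2, b2, e2⟩ := (mem_F2yF F).mp h2
    have hm : ((y2, b2) : ℕ × Bool) ∈ ({(x1, false), (y1, b1)} : Clause) := by
      rw [← e1, e2]
      exact Finset.mem_insert_of_mem (Finset.mem_singleton_self _)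
    rcases Finset.mem_insert.mp hm with h | h
    · have hyx : y2 = x1 := congrArg Prod.fst h
      have hy2u : y2 ∉ unitVars F := (Finset.mem_sdiff.mp (Finset.mem_coe.mp hy2)).2
      exact hy2u (hyx ▸ hx1)
    · rw [Finset.mem_singleton] at h
      exact hne (congrArg Prod.fst h).symm
  rw [← Finset.sum_filter_add_sum_filter_not F (fun C => C.card = 1) f, hset,
    Finset.sum_biUnion hdisj]

lemma satWt_sub (τ : ℕ → Bool) :
    (satWt w τ F : ℤ) = (wt w F : ℤ) - ∑ C ∈ F, (if SatC τ C then 0 else (w C : ℤ)) := by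
  rw [eq_sub_iff_add_eq, wtZ]
  have h1 : (satWt w τ F : ℤ) = ∑ C ∈ F, (if SatC τ C then (w C : ℤ) else 0) := by
    unfold satWt
    push_cast
    rw [Finset.sum_filter]
  rw [h1, ← Finset.sum_add_distrib]
  apply Finset.sum_congr rfl
  intro C _
  by_cases h : SatC τ C <;> simp [h]

end Final

theorem stmt13 (F : Finset Clause) (w : Clause → ℕ)
    (hF : IsCNF F) (hw : ∀ C ∈ F, 0 < w C) (h3 : Sat3 F) (hhard : HardFormula F) :
    ∃ τ : ℕ → Bool,
      (2:ℝ)/3 * wt w F + (2:ℝ)/9 * ((vars F \ unitVars F).card : ℝ) ≤ (satWt w τ F : ℝ) := by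
  set NZ : ℤ := (Fintype.card (OmegaF F) : ℤ) with hNZ
  set W : ℤ := (wt w F : ℤ) with hW
  set W1 : ℤ := (wt w (F.filter (fun C => C.card = 1)) : ℤ) with hW1
  set Y : Finset ℕ := vars F \ unitVars F with hYdef
  set n2 : ℤ := (Y.card : ℤ) with hn2
  -- decomposition of total weight
  have hWsum : W = W1 + ∑ y ∈ Y, (wt w (F2yF F y) : ℤ) := by
    rw [hW, hW1]
    simp only [wtZ]
    exact partitionF F hhard (fun C => (w C : ℤ))
  -- decomposition of the unsatisfied weight
  have hsplit : ∀ σ : OmegaF F,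
      ∑ C ∈ F, (if SatC (tauF F w σ) C then 0 else (w C : ℤ))
        = (∑ C ∈ F.filter (fun C => C.card = 1),
            (if SatC (tauF F w σ) C then 0 else (w C : ℤ)))
          + ∑ y ∈ Y, ∑ C ∈ F2yF F y, (if SatC (tauF F w σ) C then 0 else (w C : ℤ)) :=
    fun σ => partitionF F hhard _
  have hU := unit_count F w hhard
  have hYs : ∀ y ∈ Y,
      9 * ∑ σ : OmegaF F, ∑ C ∈ F2yF F y, (if SatC (tauF F w σ) C then 0 else (w C : ℤ))
        ≤ NZ * (3 * (wt w (F2yF F y) : ℤ) - 2) := by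
    intro y hy
    obtain ⟨hyv, hynot⟩ := Finset.mem_sdiff.mp (hYdef ▸ hy)
    have h := y_count F w h3 hhard hw hyv hynot
    calc 9 * ∑ σ : OmegaF F, ∑ C ∈ F2yF F y,
          (if SatC (tauF F w σ) C then 0 else (w C : ℤ))
        = 9 * ∑ σ : OmegaF F, min (LossZ F w σ y true) (LossZ F w σ y false) := by
          congr 1
          exact Finset.sum_congr rfl (fun σ _ => unsat2_eq F w hynot σ)
      _ ≤ NZ * (3 * (wt w (F2yF F y) : ℤ) - 2) := h
  -- bound the total unsatisfied weight
  have h9 : 9 * ∑ σ : OmegaF F, (∑ C ∈ F, (if SatC (tauF F w σ) C then 0 else (w C : ℤ)))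
      ≤ NZ * (3 * W - 2 * n2) := by
    simp only [hsplit]
    rw [Finset.sum_add_distrib]
    have hcomm : ∑ σ : OmegaF F, ∑ y ∈ Y, ∑ C ∈ F2yF F y,
        (if SatC (tauF F w σ) C then 0 else (w C : ℤ))
        = ∑ y ∈ Y, ∑ σ : OmegaF F, ∑ C ∈ F2yF F y,
            (if SatC (tauF F w σ) C then 0 else (w C : ℤ)) := Finset.sum_comm
    have hid : ∑ y ∈ Y, NZ * (3 * (wt w (F2yF F y) : ℤ) - 2)
        = 3 * NZ * (∑ y ∈ Y, (wt w (F2yF F y) : ℤ)) - 2 * NZ * n2 := by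
      calc ∑ y ∈ Y, NZ * (3 * (wt w (F2yF F y) : ℤ) - 2)
          = ∑ y ∈ Y, (3 * NZ * (wt w (F2yF F y) : ℤ) - 2 * NZ) :=
            Finset.sum_congr rfl (fun y _ => by ring)
        _ = ∑ y ∈ Y, 3 * NZ * (wt w (F2yF F y) : ℤ) - ∑ _y ∈ Y, (2 * NZ) :=
            Finset.sum_sub_distrib _ _
        _ = 3 * NZ * (∑ y ∈ Y, (wt w (F2yF F y) : ℤ)) - 2 * NZ * n2 := by
            rw [← Finset.mul_sum, Finset.sum_const, nsmul_eq_mul, hn2]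
            ring
    have hY9 : 9 * ∑ y ∈ Y, ∑ σ : OmegaF F, ∑ C ∈ F2yF F y,
        (if SatC (tauF F w σ) C then 0 else (w C : ℤ))
        ≤ 3 * NZ * (∑ y ∈ Y, (wt w (F2yF F y) : ℤ)) - 2 * NZ * n2 := by
      calc 9 * ∑ y ∈ Y, ∑ σ : OmegaF F, ∑ C ∈ F2yF F y,
            (if SatC (tauF F w σ) C then 0 else (w C : ℤ))
          = ∑ y ∈ Y, 9 * ∑ σ : OmegaF F, ∑ C ∈ F2yF F y,
              (if SatC (tauF F w σ) C then 0 else (w C : ℤ)) := Finset.mul_sum _ _ _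
        _ ≤ ∑ y ∈ Y, NZ * (3 * (wt w (F2yF F y) : ℤ) - 2) := Finset.sum_le_sum hYs
        _ = _ := hid
    have hmul : 9 * (∑ σ : OmegaF F, ∑ C ∈ F.filter (fun C => C.card = 1),
          (if SatC (tauF F w σ) C then 0 else (w C : ℤ))
        + ∑ σ : OmegaF F, ∑ y ∈ Y, ∑ C ∈ F2yF F y,
          (if SatC (tauF F w σ) C then 0 else (w C : ℤ)))
        = 9 * ∑ σ : OmegaF F, ∑ C ∈ F.filter (fun C => C.card = 1),
            (if SatC (tauF F w σ) C then 0 else (w C : ℤ))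
          + 9 * ∑ σ : OmegaF F, ∑ y ∈ Y, ∑ C ∈ F2yF F y,
            (if SatC (tauF F w σ) C then 0 else (w C : ℤ)) := by ring
    rw [hmul, hcomm]
    have hexp : NZ * (3 * W - 2 * n2)
        = 3 * (NZ * W1) + (3 * NZ * (∑ y ∈ Y, (wt w (F2yF F y) : ℤ)) - 2 * NZ * n2) := by
      rw [hWsum]; ring
    linarith [hY9, hU]
  -- average argument
  have huniv : (Finset.univ : Finset (OmegaF F)).Nonempty := ⟨fun _ => 0, Finset.mem_univ _⟩
  have havg : ∑ _σ : OmegaF F, (6 * W + 2 * n2)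
      ≤ ∑ σ : OmegaF F, 9 * (satWt w (tauF F w σ) F : ℤ) := by
    have hsat : ∀ σ : OmegaF F, 9 * (satWt w (tauF F w σ) F : ℤ)
        = 9 * W - 9 * (∑ C ∈ F, (if SatC (tauF F w σ) C then 0 else (w C : ℤ))) := by
      intro σ
      have h := satWt_sub F w (tauF F w σ)
      rw [← hW] at h
      rw [h]
      ring
    have htot : ∑ σ : OmegaF F, 9 * (satWt w (tauF F w σ) F : ℤ)
        = NZ * (9 * W) - 9 * ∑ σ : OmegaF F,
            (∑ C ∈ F, (if SatC (tauF F w σ) C then 0 else (w C : ℤ))) := by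
      simp only [hsat]
      rw [Finset.sum_sub_distrib, Finset.sum_const, Finset.card_univ, nsmul_eq_mul,
        ← Finset.mul_sum, hNZ]
    have hconst : ∑ _σ : OmegaF F, (6 * W + 2 * n2) = NZ * (6 * W + 2 * n2) := by
      rw [Finset.sum_const, Finset.card_univ, nsmul_eq_mul, hNZ]
    rw [hconst, htot]
    have hexp2 : NZ * (9 * W) - NZ * (3 * W - 2 * n2) = NZ * (6 * W + 2 * n2) := by ring
    linarith [h9]
  obtain ⟨σ, -, hσ⟩ := Finset.exists_le_of_sum_le huniv havg
  refine ⟨tauF F w σ, ?_⟩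
  rw [hW, hn2, hYdef] at hσ
  have hcast : 6 * (wt w F : ℝ) + 2 * ((vars F \ unitVars F).card : ℝ)
      ≤ 9 * (satWt w (tauF F w σ) F : ℝ) := by exact_mod_cast hσ
  linarith
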